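/- arXiv:2003.06174 — 4 statements merged into one kernel-verified Lean document; each statement's English description precedes it below -/
import Mathlib

section
/- Let G be a finite tree (possibly with ends, i.e. half-edges attached to a single vertex), and let m ≥ 1. A condition flow of type m on G is an assignment R of natural numbers to all half-edges and ends such that (P1) for every bounded edge e with half-edges e₁, e₂ one has R(e₁) + R(e₂) = m − 1, and (P2) for every vertex v, the sum of R over all incoming edges of v (i.e. ends at v together with, for each bounded edge at v, the half-edge adjacent to the other endpoint) equals leak(v). Then a condition flow of type m on G is uniquely determined by the leak function leak : V(G) → ℕ and the values of R on the ends of G; i.e., two condition flows of type m with the same leak function and the same flows on all ends are equal. -/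
open SimpleGraph

private lemma subtree_ssubset {V : Type*} [Fintype V] [DecidableEq V] (G : SimpleGraph V)
    (hT : G.IsTree) {v w u : V} (hvw : G.Adj v w) (hwu : G.Adj w u) (huv : u ≠ v) :
    {z | (G \ fromEdgeSet {s(w, u)}).Reachable u z}
      ⊂ {z | (G \ fromEdgeSet {s(v, w)}).Reachable w z} := by
  have hbridge : ∀ ⦃x y : V⦄, G.Adj x y → ¬ (G \ fromEdgeSet {s(x, y)}).Reachable x y := by
    intro x y hxy
    have := (isAcyclic_iff_forall_adj_isBridge.mp hT.IsAcyclic) hxy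
    exact isBridge_iff.mp this
  have hwune : s(w, u) ≠ s(v, w) := by
    intro h
    rw [Sym2.eq_iff] at h
    rcases h with ⟨rfl, rfl⟩ | ⟨-, rfl⟩
    · exact hvw.ne rfl
    · exact huv rfl
  have hsub : {z | (G \ fromEdgeSet {s(w, u)}).Reachable u z}
      ⊆ {z | (G \ fromEdgeSet {s(v, w)}).Reachable w z} := by
    intro z hz
    obtain ⟨p⟩ := hz
    have hne : ∀ e ∈ p.edges, e ∈ (G \ fromEdgeSet {s(v, w)}).edgeSet := by
      intro e he
      have heG := p.edges_subset_edgeSet he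
      rw [edgeSet_sdiff, edgeSet_fromEdgeSet] at heG ⊢
      refine ⟨heG.1, ?_⟩
      simp only [Set.mem_diff, Set.mem_singleton_iff] at *
      rintro ⟨rfl, -⟩
      -- then w is on the walk p, so reachable from u avoiding edge {w,u}
      have hwsupp : w ∈ p.support := p.snd_mem_support_of_mem_edges he
      have : (G \ fromEdgeSet {s(w, u)}).Reachable u w := ⟨p.takeUntil w hwsupp⟩
      exact hbridge hwu this.symm
    have q := p.transfer _ hne
    have hadj : (G \ fromEdgeSet {s(v, w)}).Adj w u := by
      rw [sdiff_adj, fromEdgeSet_adj]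
      exact ⟨hwu, by simp [hwune]⟩
    exact hadj.reachable.trans ⟨q⟩
  rw [Set.ssubset_iff_of_subset hsub]
  refine ⟨w, Reachable.refl w, fun hc => ?_⟩
  exact hbridge hwu (Reachable.symm hc)

/-- Uniqueness of a condition flow of type `m` on a finite tree.
`R v w` is the flow on the half-edge of the bounded edge `{v,w}` adjacent to `v`;
ends are modeled by a finite type `E` with attachment vertex `endVertex` and
fixed end flows `Rend`.  The flow of a vertex `v` is the sum of the end flows at `v`
together with, for each bounded edge at `v`, the flow of the half-edge adjacent to
the other endpoint. -/
theorem condition_flow_unique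
    {V E : Type*} [Fintype V] [DecidableEq V] [Fintype E]
    (G : SimpleGraph V) [DecidableRel G.Adj] (hT : G.IsTree)
    (m : ℕ) (hm : 1 ≤ m)
    (endVertex : E → V) (Rend : E → ℕ) (leak : V → ℕ)
    (R R' : V → V → ℕ)
    (hP1 : ∀ v w, G.Adj v w → R v w + R w v = m - 1)
    (hP1' : ∀ v w, G.Adj v w → R' v w + R' w v = m - 1)
    (hP2 : ∀ v, (∑ e : E, if endVertex e = v then Rend e else 0)
        + ∑ w ∈ G.neighborFinset v, R w v = leak v)
    (hP2' : ∀ v, (∑ e : E, if endVertex e = v then Rend e else 0)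
        + ∑ w ∈ G.neighborFinset v, R' w v = leak v) :
    ∀ v w, G.Adj v w → R v w = R' v w := by
  classical
  have hsum : ∀ w, ∑ u ∈ G.neighborFinset w, R u w = ∑ u ∈ G.neighborFinset w, R' u w := by
    intro w
    exact Nat.add_left_cancel ((hP2 w).trans (hP2' w).symm)
  suffices H : ∀ n (v w : V), G.Adj v w →
      ({z | (G \ fromEdgeSet {s(v, w)}).Reachable w z}).ncard ≤ n → R v w = R' v w by
    intro v w h
    exact H _ v w h le_rfl
  intro n
  induction n with
  | zero =>
    intro v w hvw hle
    exfalso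
    have : 0 < ({z | (G \ fromEdgeSet {s(v, w)}).Reachable w z}).ncard :=
      (Set.ncard_pos (Set.toFinite _)).mpr ⟨w, Reachable.refl w⟩
    omega
  | succ n ih =>
    intro v w hvw hle
    have hv : v ∈ G.neighborFinset w := by
      rw [mem_neighborFinset]; exact hvw.symm
    have heq : ∀ u ∈ (G.neighborFinset w).erase v, R u w = R' u w := by
      intro u hu
      obtain ⟨huv, hu⟩ := Finset.mem_erase.mp hu
      have hwu : G.Adj w u := (mem_neighborFinset _ _ _).mp hu
      have hlt := Set.ncard_lt_ncard (subtree_ssubset G hT hvw hwu huv) (Set.toFinite _)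
      have hR : R w u = R' w u := ih w u hwu (by omega)
      have h12 := (hP1 w u hwu).trans (hP1' w u hwu).symm
      rw [hR] at h12
      exact Nat.add_left_cancel h12
    have hs := hsum w
    rw [← Finset.add_sum_erase _ _ hv, ← Finset.add_sum_erase _ _ hv,
      Finset.sum_congr rfl heq] at hs
    exact Nat.add_right_cancel hs
end

section
/- Let G be a finite tree with n vertices, b bounded edges, and some ends, equipped with a condition flow of type m with leak function leak : V(G) → ℕ. Then the sum of the flows on all ends of G equals (Σ_{v ∈ V(G)} leak(v)) − (m − 1)·b. In particular, if leak(v) = m for all vertices, the sum of the end flows equals m·n − (m−1)·(n−1) = n + m − 1. -/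
/-- For a condition flow of type `m` on a finite tree with `b` bounded edges,
the sum of the flows on the ends equals `(∑ v, leak v) - (m-1)·b`.
In particular, if `leak v = m` for all `v`, the sum of end flows is
`n + m - 1` where `n` is the number of vertices. -/
theorem sum_of_end_flows
    {V E : Type*} [Fintype V] [DecidableEq V] [Fintype E]
    (G : SimpleGraph V) [DecidableRel G.Adj] (hT : G.IsTree)
    (m : ℕ) (hm : 1 ≤ m)
    (endVertex : E → V) (Rend : E → ℕ) (leak : V → ℕ)
    (R : V → V → ℕ)
    (hP1 : ∀ v w, G.Adj v w → R v w + R w v = m - 1)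
    (hP2 : ∀ v, (∑ e : E, if endVertex e = v then Rend e else 0)
        + ∑ w ∈ G.neighborFinset v, R w v = leak v) :
    (∑ e : E, (Rend e : ℤ))
      = (∑ v : V, (leak v : ℤ)) - ((m : ℤ) - 1) * G.edgeFinset.card ∧
    ((∀ v, leak v = m) →
      (∑ e : E, (Rend e : ℤ)) = (Fintype.card V : ℤ) + m - 1) := by
  classical
  -- sum the vertex condition over all vertices
  have hsum : (∑ v : V, ((∑ e : E, if endVertex e = v then Rend e else 0)
      + ∑ w ∈ G.neighborFinset v, R w v)) = ∑ v : V, leak v := by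
    exact Finset.sum_congr rfl fun v _ => hP2 v
  have hEnd : (∑ v : V, ∑ e : E, if endVertex e = v then Rend e else 0)
      = ∑ e : E, Rend e := by
    rw [Finset.sum_comm]
    refine Finset.sum_congr rfl fun e _ => ?_
    simp
  -- the double sum of R over directed adjacencies, both orientations agree
  have hswap : (∑ v : V, ∑ w ∈ G.neighborFinset v, R w v)
      = ∑ v : V, ∑ w ∈ G.neighborFinset v, R v w := by
    rw [Finset.sum_comm' (t' := Finset.univ) (s' := fun w => G.neighborFinset w)
      (fun v w => by simp [SimpleGraph.adj_comm])]
  have hdouble : 2 * (∑ v : V, ∑ w ∈ G.neighborFinset v, R w v)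
      = 2 * (G.edgeFinset.card * (m - 1)) := by
    have : (∑ v : V, ∑ w ∈ G.neighborFinset v, R w v)
        + (∑ v : V, ∑ w ∈ G.neighborFinset v, R w v)
        = ∑ v : V, ∑ w ∈ G.neighborFinset v, (R w v + R v w) := by
      nth_rewrite 2 [hswap]
      rw [← Finset.sum_add_distrib]
      exact Finset.sum_congr rfl fun v _ => (Finset.sum_add_distrib).symm
    have h2 : (∑ v : V, ∑ w ∈ G.neighborFinset v, (R w v + R v w))
        = ∑ v : V, G.degree v * (m - 1) := by
      refine Finset.sum_congr rfl fun v _ => ?_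
      rw [SimpleGraph.degree, Finset.card_eq_sum_ones, Finset.sum_mul, one_mul]
      refine Finset.sum_congr rfl fun w hw => ?_
      rw [add_comm]
      exact hP1 v w ((SimpleGraph.mem_neighborFinset G v w).mp hw)
    rw [two_mul, this, h2, ← Finset.sum_mul, SimpleGraph.sum_degrees_eq_twice_card_edges, mul_assoc]
  have hS : (∑ v : V, ∑ w ∈ G.neighborFinset v, R w v)
      = G.edgeFinset.card * (m - 1) := by
    omega
  have hmain : (∑ e : E, Rend e) + G.edgeFinset.card * (m - 1) = ∑ v : V, leak v := by
    rw [← hS, ← hEnd, ← Finset.sum_add_distrib]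
    exact hsum
  have hcast : (∑ e : E, (Rend e : ℤ)) + (G.edgeFinset.card : ℤ) * ((m : ℤ) - 1)
      = ∑ v : V, (leak v : ℤ) := by
    have := congrArg (Nat.cast : ℕ → ℤ) hmain
    push_cast [Nat.cast_sub hm] at this
    convert this using 2
  have h1 : (∑ e : E, (Rend e : ℤ))
      = (∑ v : V, (leak v : ℤ)) - ((m : ℤ) - 1) * G.edgeFinset.card := by
    linarith [hcast]
  refine ⟨h1, fun hleak => ?_⟩
  have hcard : (G.edgeFinset.card : ℤ) + 1 = Fintype.card V := by
    exact_mod_cast congrArg (Nat.cast : ℕ → ℤ) hT.card_edgeFinset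
  have hleaksum : (∑ v : V, (leak v : ℤ)) = (Fintype.card V : ℤ) * m := by
    simp [hleak, Finset.sum_const, mul_comm]
  rw [h1, hleaksum]
  have : (m : ℤ) ≥ 1 := by exact_mod_cast hm
  nlinarith [hcard]
end

section
/- Let T be a finite tree and let β₁, β₂, β₃, β₄ be four distinct leaves of T. For a pair (β_i, β_j) let P(i,j) denote the unique path in T between β_i and β_j. Suppose that for one partition of {1,2,3,4} into two pairs, say {1,2} and {3,4}, the paths P(1,2) and P(3,4) intersect in exactly one vertex v. Then for every partition of {1,2,3,4} into two pairs {i₁,i₂} and {i₃,i₄}, the paths P(i₁,i₂) and P(i₃,i₄) also intersect exactly in the single vertex v. -/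
set_option maxHeartbeats 1000000

open SimpleGraph Walk

private lemma glue_isPath {V : Type*} {G : SimpleGraph V} {a b v : V}
    {p : G.Walk a v} {q : G.Walk v b} (hp : p.IsPath) (hq : q.IsPath)
    (h : ∀ x, x ∈ p.support → x ∈ q.support → x = v) : (p.append q).IsPath := by
  rw [Walk.isPath_def, Walk.support_append]
  refine List.Nodup.append hp.support_nodup ?_ ?_
  · have := hq.support_nodup
    rw [Walk.support_eq_cons] at this
    exact this.of_cons
  · intro x hxp hxq
    have hx : x ∈ q.support := by
      rw [Walk.support_eq_cons]; exact List.mem_cons_of_mem _ hxq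
    have hxv : x = v := h x hxp hx
    subst hxv
    have := hq.support_nodup
    rw [Walk.support_eq_cons] at this
    exact (List.nodup_cons.mp this).1 hxq

private lemma support_toFinset_append {V : Type*} [DecidableEq V] {G : SimpleGraph V}
    {a b v : V} (p : G.Walk a v) (q : G.Walk v b) :
    (p.append q).support.toFinset = p.support.toFinset ∪ q.support.toFinset := by
  ext x
  simp [Walk.mem_support_append_iff]

private lemma split_inter {V : Type*} [DecidableEq V] {G : SimpleGraph V}
    {a b v : V} {p : G.Walk a b} (hp : p.IsPath) (hv : v ∈ p.support) :
    (p.takeUntil v hv).support.toFinset ∩ (p.dropUntil v hv).support.toFinset = {v} := by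
  apply Finset.Subset.antisymm
  · intro x hx
    rw [Finset.mem_inter, List.mem_toFinset, List.mem_toFinset] at hx
    obtain ⟨hx1, hx2⟩ := hx
    have hnodup : ((p.takeUntil v hv).support ++ (p.dropUntil v hv).support.tail).Nodup := by
      have := hp.support_nodup
      rwa [← Walk.take_spec p hv, Walk.support_append] at this
    by_contra hxv
    rw [Finset.mem_singleton] at hxv
    have hx2' : x ∈ (p.dropUntil v hv).support.tail := by
      have := Walk.support_eq_cons (p.dropUntil v hv)
      rw [this] at hx2
      rcases List.mem_cons.mp hx2 with h | h
      · exact absurd h hxv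
      · exact h
    exact (List.disjoint_of_nodup_append hnodup) hx1 hx2'
  · intro x hx
    rw [Finset.mem_singleton] at hx
    subst hx
    rw [Finset.mem_inter, List.mem_toFinset, List.mem_toFinset]
    exact ⟨Walk.end_mem_support _, Walk.start_mem_support _⟩

/-- Path criterion for degenerated tropical cross-ratios: in a finite tree with
four distinct leaves `β 0, β 1, β 2, β 3`, if the paths between `β 0, β 1` and
between `β 2, β 3` intersect exactly in the single vertex `v`, then for every
partition of the four leaves into two pairs the corresponding paths also
intersect exactly in `v`. -/
theorem path_criterion {V : Type*} [Fintype V] [DecidableEq V]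
    (G : SimpleGraph V) [DecidableRel G.Adj] (hT : G.IsTree)
    (β : Fin 4 → V) (hinj : Function.Injective β)
    (hleaf : ∀ i, G.degree (β i) = 1) (v : V)
    (h12 : ∀ (p : G.Walk (β 0) (β 1)) (q : G.Walk (β 2) (β 3)),
      p.IsPath → q.IsPath → p.support.toFinset ∩ q.support.toFinset = {v}) :
    ∀ (σ : Equiv.Perm (Fin 4)) (p : G.Walk (β (σ 0)) (β (σ 1)))
      (q : G.Walk (β (σ 2)) (β (σ 3))),
      p.IsPath → q.IsPath → p.support.toFinset ∩ q.support.toFinset = {v} := by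
  classical
  obtain ⟨p01, hp01, _⟩ := hT.existsUnique_path (β 0) (β 1)
  obtain ⟨p23, hp23, _⟩ := hT.existsUnique_path (β 2) (β 3)
  have hkey : p01.support.toFinset ∩ p23.support.toFinset = {v} := h12 p01 p23 hp01 hp23
  have hv01 : v ∈ p01.support := by
    have : v ∈ p01.support.toFinset ∩ p23.support.toFinset := by rw [hkey]; simp
    simpa using (Finset.mem_inter.mp this).1
  have hv23 : v ∈ p23.support := by
    have : v ∈ p01.support.toFinset ∩ p23.support.toFinset := by rw [hkey]; simp
    simpa using (Finset.mem_inter.mp this).2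
  -- the four legs from v to the leaves
  let Q : ∀ i : Fin 4, G.Walk v (β i) := fun i =>
    match i with
    | ⟨0, _⟩ => (p01.takeUntil v hv01).reverse
    | ⟨1, _⟩ => p01.dropUntil v hv01
    | ⟨2, _⟩ => (p23.takeUntil v hv23).reverse
    | ⟨3, _⟩ => p23.dropUntil v hv23
  have hQpath : ∀ i, (Q i).IsPath := by
    intro i
    fin_cases i
    · exact (hp01.takeUntil hv01).reverse
    · exact hp01.dropUntil hv01
    · exact (hp23.takeUntil hv23).reverse
    · exact hp23.dropUntil hv23
  have hQsub : ∀ i, (Q i).support.toFinset ⊆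
      (if (i : ℕ) < 2 then p01.support.toFinset else p23.support.toFinset) := by
    intro i
    fin_cases i <;> intro x hx <;> rw [List.mem_toFinset] at hx
    · have hx' : x ∈ (p01.takeUntil v hv01).reverse.support := hx
      rw [Walk.support_reverse, List.mem_reverse] at hx'
      rw [if_pos (by norm_num), List.mem_toFinset]
      exact Walk.support_takeUntil_subset _ hv01 hx'
    · have hx' : x ∈ (p01.dropUntil v hv01).support := hx
      rw [if_pos (by norm_num), List.mem_toFinset]
      exact Walk.support_dropUntil_subset _ hv01 hx'
    · have hx' : x ∈ (p23.takeUntil v hv23).reverse.support := hx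
      rw [Walk.support_reverse, List.mem_reverse] at hx'
      rw [if_neg (by norm_num), List.mem_toFinset]
      exact Walk.support_takeUntil_subset _ hv23 hx'
    · have hx' : x ∈ (p23.dropUntil v hv23).support := hx
      rw [if_neg (by norm_num), List.mem_toFinset]
      exact Walk.support_dropUntil_subset _ hv23 hx'
  have h01 : (Q 0).support.toFinset ∩ (Q 1).support.toFinset = {v} := by
    have base := split_inter hp01 hv01
    have e0 : (Q 0).support.toFinset = (p01.takeUntil v hv01).support.toFinset := by
      show (p01.takeUntil v hv01).reverse.support.toFinset = _
      ext x; simp [Walk.support_reverse]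
    have e1 : (Q 1).support.toFinset = (p01.dropUntil v hv01).support.toFinset := rfl
    rw [e0, e1]; exact base
  have h23 : (Q 2).support.toFinset ∩ (Q 3).support.toFinset = {v} := by
    have base := split_inter hp23 hv23
    have e0 : (Q 2).support.toFinset = (p23.takeUntil v hv23).support.toFinset := by
      show (p23.takeUntil v hv23).reverse.support.toFinset = _
      ext x; simp [Walk.support_reverse]
    have e1 : (Q 3).support.toFinset = (p23.dropUntil v hv23).support.toFinset := rfl
    rw [e0, e1]; exact base
  have hvQ : ∀ i, v ∈ (Q i).support.toFinset := by
    intro i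
    rw [List.mem_toFinset]
    exact Walk.start_mem_support _
  have hcross : ∀ i j : Fin 4, (i : ℕ) < 2 → ¬ ((j : ℕ) < 2) →
      (Q i).support.toFinset ∩ (Q j).support.toFinset = {v} := by
    intro i j hi hj
    apply Finset.Subset.antisymm
    · intro x hx
      rw [Finset.mem_inter] at hx
      have h1 := hQsub i hx.1
      have h2 := hQsub j hx.2
      rw [if_pos hi] at h1
      rw [if_neg hj] at h2
      rw [← hkey]
      exact Finset.mem_inter.mpr ⟨h1, h2⟩
    · intro x hx
      rw [Finset.mem_singleton] at hx
      subst hx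
      exact Finset.mem_inter.mpr ⟨hvQ i, hvQ j⟩
  have hA : ∀ i j : Fin 4, i ≠ j →
      (Q i).support.toFinset ∩ (Q j).support.toFinset = {v} := by
    intro i j hij
    fin_cases i <;> fin_cases j
    · exact absurd rfl hij
    · exact h01
    · exact hcross 0 2 (by decide) (by decide)
    · exact hcross 0 3 (by decide) (by decide)
    · exact (Finset.inter_comm _ _).trans h01
    · exact absurd rfl hij
    · exact hcross 1 2 (by decide) (by decide)
    · exact hcross 1 3 (by decide) (by decide)
    · exact (Finset.inter_comm _ _).trans (hcross 0 2 (by decide) (by decide))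
    · exact (Finset.inter_comm _ _).trans (hcross 1 2 (by decide) (by decide))
    · exact absurd rfl hij
    · exact h23
    · exact (Finset.inter_comm _ _).trans (hcross 0 3 (by decide) (by decide))
    · exact (Finset.inter_comm _ _).trans (hcross 1 3 (by decide) (by decide))
    · exact (Finset.inter_comm _ _).trans h23
    · exact absurd rfl hij
  -- glue: the unique path between β i and β j has support A i ∪ A j
  have hglue : ∀ (i j : Fin 4), i ≠ j → ∀ (p : G.Walk (β i) (β j)), p.IsPath →
      p.support.toFinset = (Q i).support.toFinset ∪ (Q j).support.toFinset := by
    intro i j hij p hp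
    have hW : ((Q i).reverse.append (Q j)).IsPath := by
      apply glue_isPath (hQpath i).reverse (hQpath j)
      intro x hx1 hx2
      have : x ∈ (Q i).support.toFinset ∩ (Q j).support.toFinset := by
        rw [Finset.mem_inter, List.mem_toFinset, List.mem_toFinset]
        rw [Walk.support_reverse, List.mem_reverse] at hx1
        exact ⟨hx1, hx2⟩
      rw [hA i j hij] at this
      exact Finset.mem_singleton.mp this
    have hpe : p = (Q i).reverse.append (Q j) :=
      (hT.existsUnique_path (β i) (β j)).unique hp hW
    rw [hpe, support_toFinset_append]
    congr 1
    ext x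
    simp [Walk.support_reverse]
  intro σ p q hp hq
  have h01' : σ 0 ≠ σ 1 := fun h => by simpa using σ.injective h
  have h23' : σ 2 ≠ σ 3 := fun h => by simpa using σ.injective h
  have h02 : σ 0 ≠ σ 2 := fun h => by simpa using σ.injective h
  have h03 : σ 0 ≠ σ 3 := fun h => by simpa using σ.injective h
  have h13 : σ 1 ≠ σ 2 := fun h => by simpa using σ.injective h
  have h14 : σ 1 ≠ σ 3 := fun h => by simpa using σ.injective h
  rw [hglue _ _ h01' p hp, hglue _ _ h23' q hq]
  rw [Finset.union_inter_distrib_right, Finset.inter_union_distrib_left,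
    Finset.inter_union_distrib_left]
  rw [hA _ _ h02, hA _ _ h03, hA _ _ h13, hA _ _ h14]
  simp
end

section
/- Let G be a finite tree with ends, and assign to each end a natural number flow. Define a flow-spreading procedure: initialize all non-end half-edge flows to 0; repeatedly pick a vertex v with incoming edges e_inc,1,…, and for each bounded edge at v set the flow on the outgoing half-edge e_out,i to flow(v) − R(e_inc,i) − 1 if flow(v) − R(e_inc,i) > 0, and to 0 if flow(v) − R(e_inc,i) = 0 and flow(v) ≠ 0, always taking the maximum with the current value; here flow(v) is the current sum of flows on incoming edges of v. Then this procedure terminates, and the resulting flow structure on G is unique, i.e. independent of the order in which vertices are processed. -/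
open SimpleGraph Finset

namespace FlowSpreadAux

variable {V : Type*} [Fintype V] [DecidableEq V]

/-- Reachability in the graph with one edge deleted, via walks avoiding the edge. -/
lemma reach_iff {G : SimpleGraph V} {e : Sym2 V} {a x : V} :
    (G.deleteEdges {e}).Reachable a x ↔ ∃ p : G.Walk a x, e ∉ p.edges := by
  constructor
  · rintro ⟨q⟩
    have hsub : ∀ f ∈ q.edges, f ∈ G.edgeSet := by
      intro f hf
      have := q.edges_subset_edgeSet hf
      rw [SimpleGraph.edgeSet_deleteEdges] at this
      exact this.1
    refine ⟨q.transfer G hsub, ?_⟩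
    rw [SimpleGraph.Walk.edges_transfer]
    intro he
    have := q.edges_subset_edgeSet he
    rw [SimpleGraph.edgeSet_deleteEdges] at this
    exact this.2 rfl
  · rintro ⟨p, hp⟩
    exact ⟨p.toDeleteEdges {e} (fun f hf hfe => hp (by rwa [Set.mem_singleton_iff.mp hfe] at hf))⟩

/-- In a tree, any path between adjacent vertices uses the edge between them. -/
lemma edge_mem_of_isPath {G : SimpleGraph V} (hT : G.IsTree) {u v : V} (huv : G.Adj u v)
    (p : G.Walk u v) (hp : p.IsPath) : s(u, v) ∈ p.edges := by
  have h := hT.IsAcyclic.path_unique ⟨p, hp⟩ (SimpleGraph.Path.singleton huv)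
  have : p = (SimpleGraph.Path.singleton huv : G.Path u v).val := by
    exact congrArg Subtype.val h
  rw [this]
  simp [SimpleGraph.Path.singleton]

lemma not_reach_of_adj {G : SimpleGraph V} (hT : G.IsTree) {u v : V} (huv : G.Adj u v) :
    ¬ (G.deleteEdges {s(u, v)}).Reachable u v := by
  rw [reach_iff]
  rintro ⟨p, hp⟩
  have hb : s(u, v) ∈ p.bypass.edges := edge_mem_of_isPath hT huv p.bypass p.bypass_isPath
  exact hp (p.edges_bypass_subset hb)

noncomputable def mu (G : SimpleGraph V) (v w : V) : ℕ :=
  {x | (G.deleteEdges {s(v, w)}).Reachable v x}.ncard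

lemma mu_lt {G : SimpleGraph V} (hT : G.IsTree) {u v w : V}
    (huv : G.Adj u v) (hvw : G.Adj v w) (huw : u ≠ w) : mu G u v < mu G v w := by
  have hss : {x | (G.deleteEdges {s(u, v)}).Reachable u x}
      ⊂ {x | (G.deleteEdges {s(v, w)}).Reachable v x} := by
    constructor
    · intro x hx
      obtain ⟨p, hp⟩ := reach_iff.mp hx
      -- pass to the underlying path
      set q := p.bypass with hq
      have hqp : q.IsPath := p.bypass_isPath
      have hquv : s(u, v) ∉ q.edges := fun h => hp (p.edges_bypass_subset h)
      have hvq : v ∉ q.support := by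
        intro hv
        have h1 : (q.takeUntil v hv).IsPath := hqp.takeUntil hv
        have h2 : s(u, v) ∈ (q.takeUntil v hv).edges :=
          edge_mem_of_isPath hT huv _ h1
        exact hquv (q.edges_takeUntil_subset hv h2)
      refine reach_iff.mpr ⟨SimpleGraph.Walk.cons huv.symm q, ?_⟩
      simp only [SimpleGraph.Walk.edges_cons, List.mem_cons]
      rintro (h | h)
      · rw [Sym2.eq_iff] at h
        rcases h with ⟨_, h⟩ | ⟨h, _⟩
        · exact huw h.symm
        · exact huv.ne h.symm
      · exact hvq (SimpleGraph.Walk.fst_mem_support_of_mem_edges q h)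
    · intro hle
      have hv : v ∈ {x | (G.deleteEdges {s(v, w)}).Reachable v x} := SimpleGraph.Reachable.refl v
      have := hle hv
      exact not_reach_of_adj hT huv this
  exact Set.ncard_lt_ncard hss (Set.toFinite _)

variable (G : SimpleGraph V) [DecidableRel G.Adj]

noncomputable def spread (hT : G.IsTree) (A : V → ℕ) (v w : V) : ℕ :=
  if h : G.Adj v w then
    (A v + ∑ u ∈ ((G.neighborFinset v).erase w).attach,
      spread hT A u.1 v) - 1
  else 0
termination_by mu G v w
decreasing_by
  · have hu := u.2
    rw [Finset.mem_erase, SimpleGraph.mem_neighborFinset] at hu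
    exact mu_lt hT hu.2.symm h hu.1

variable {G}

lemma spread_eq (hT : G.IsTree) (A : V → ℕ) {v w : V} (h : G.Adj v w) :
    spread G hT A v w = (A v + ∑ u ∈ (G.neighborFinset v).erase w, spread G hT A u v) - 1 := by
  rw [spread, dif_pos h, Finset.sum_attach ((G.neighborFinset v).erase w)
    (fun u => spread G hT A u v)]

lemma spread_zero (hT : G.IsTree) (A : V → ℕ) {v w : V} (h : ¬ G.Adj v w) :
    spread G hT A v w = 0 := by
  rw [spread, dif_neg h]

/-- Key arithmetic rewriting of the stability condition. -/
lemma cond_rewrite (A : V → ℕ) (s : V → V → ℕ) {v w : V} (h : G.Adj v w) :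
    (A v + ∑ u ∈ G.neighborFinset v, s u v) - s w v - 1
      = (A v + ∑ u ∈ (G.neighborFinset v).erase w, s u v) - 1 := by
  have hw : w ∈ G.neighborFinset v := (SimpleGraph.mem_neighborFinset G v w).mpr h
  rw [← Finset.add_sum_erase _ _ hw]
  omega

end FlowSpreadAux

/-- The flow-spreading procedure on a finite tree terminates and its result is
unique: there is a unique least state `s` (flows on half-edges, `s v w` being
the flow on the half-edge of the bounded edge `{v,w}` adjacent to `v`) that is
stable under the update rule `R(e_out) = flow(v) - R(e_inc) - 1` (truncated),
where `flow(v)` is the sum of the given end flows at `v` and of the flows on the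
incoming half-edges at `v`. -/
theorem flow_spreading_terminates_uniquely
    {V E : Type*} [Fintype V] [DecidableEq V] [Fintype E]
    (G : SimpleGraph V) [DecidableRel G.Adj] (hT : G.IsTree)
    (endVertex : E → V) (Rend : E → ℕ) :
    ∃! s : V → V → ℕ,
      ((∀ v w, ¬ G.Adj v w → s v w = 0) ∧
       (∀ v w, G.Adj v w →
         ((∑ e : E, if endVertex e = v then Rend e else 0)
            + ∑ u ∈ G.neighborFinset v, s u v) - s w v - 1 ≤ s v w)) ∧
      (∀ s' : V → V → ℕ,
        ((∀ v w, ¬ G.Adj v w → s' v w = 0) ∧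
         (∀ v w, G.Adj v w →
           ((∑ e : E, if endVertex e = v then Rend e else 0)
              + ∑ u ∈ G.neighborFinset v, s' u v) - s' w v - 1 ≤ s' v w)) →
        ∀ v w, s v w ≤ s' v w) := by
  classical
  set A : V → ℕ := fun v => ∑ e : E, if endVertex e = v then Rend e else 0 with hA
  set Stable : (V → V → ℕ) → Prop := fun s =>
    (∀ v w, ¬ G.Adj v w → s v w = 0) ∧
    (∀ v w, G.Adj v w → (A v + ∑ u ∈ G.neighborFinset v, s u v) - s w v - 1 ≤ s v w)
    with hStable
  -- the canonical stable state
  have hspread : Stable (FlowSpreadAux.spread G hT A) := by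
    constructor
    · intro v w h; exact FlowSpreadAux.spread_zero hT A h
    · intro v w h
      rw [FlowSpreadAux.cond_rewrite A _ h, ← FlowSpreadAux.spread_eq hT A h]
  set sMin : V → V → ℕ := fun v w => sInf {n | ∃ s', Stable s' ∧ s' v w = n} with hsMin
  have hne : ∀ v w, {n | ∃ s', Stable s' ∧ s' v w = n}.Nonempty := by
    intro v w; exact ⟨_, FlowSpreadAux.spread G hT A, hspread, rfl⟩
  have hmem : ∀ v w, ∃ s', Stable s' ∧ s' v w = sMin v w := by
    intro v w; exact Nat.sInf_mem (hne v w)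
  have hle : ∀ s', Stable s' → ∀ v w, sMin v w ≤ s' v w := by
    intro s' hs' v w
    exact Nat.sInf_le ⟨s', hs', rfl⟩
  have hstab : Stable sMin := by
    constructor
    · intro v w h
      obtain ⟨s', hs', heq⟩ := hmem v w
      rw [← heq, hs'.1 v w h]
    · intro v w h
      obtain ⟨s₀, hs₀, heq⟩ := hmem v w
      rw [FlowSpreadAux.cond_rewrite A _ h]
      calc (A v + ∑ u ∈ (G.neighborFinset v).erase w, sMin u v) - 1
          ≤ (A v + ∑ u ∈ (G.neighborFinset v).erase w, s₀ u v) - 1 := by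
            have : ∑ u ∈ (G.neighborFinset v).erase w, sMin u v
                ≤ ∑ u ∈ (G.neighborFinset v).erase w, s₀ u v :=
              Finset.sum_le_sum (fun u _ => hle s₀ hs₀ u v)
            omega
        _ = (A v + ∑ u ∈ G.neighborFinset v, s₀ u v) - s₀ w v - 1 :=
            (FlowSpreadAux.cond_rewrite A _ h).symm
        _ ≤ s₀ v w := hs₀.2 v w h
        _ = sMin v w := heq
  refine ⟨sMin, ⟨hstab, fun s' hs' => hle s' hs'⟩, ?_⟩
  rintro y ⟨hy, hyle⟩
  funext v w
  exact le_antisymm (hyle sMin hstab v w) (hle y hy v w)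
end
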